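/- arXiv:2107.06644 — 5 statements merged into one kernel-verified Lean document; each statement's English description precedes it below -/
import Mathlib

section
/- For 0 ≤ k, k' ≤ ord(β−α), the Λ_E-modules M(k) and M(k') are isomorphic if and only if k = k'. -/
/-- Sumida, uniqueness: for `0 ≤ k, k' ≤ ord(β−α)`, the modules
`M(k) = ⟨(1,1),(0,π^k)⟩_O` and `M(k')` (submodules of `O ⊕ O` with `S` acting by
`S·(a,b) = (αa, βb)`) are isomorphic as `Λ_E = O[[S]]`-modules — i.e. there is an
`O`-linear isomorphism commuting with the `S`-action — if and only if `k = k'`. -/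
theorem stmt3 (O : Type*) [CommRing O] [IsDomain O] [IsDiscreteValuationRing O]
    (π : O) (hπ : Irreducible π) (α β : O) (hα : π ∣ α) (hβ : π ∣ β)
    (hαβ : α ≠ β) (k k' : ℕ) (hk : (π ^ k : O) ∣ β - α) (hk' : (π ^ k' : O) ∣ β - α) :
    (∃ e : (Submodule.span O ({(1, 1), (0, π ^ k)} : Set (O × O))) ≃ₗ[O]
        (Submodule.span O ({(1, 1), (0, π ^ k')} : Set (O × O))),
      ∀ (x : O × O) (hx : x ∈ Submodule.span O ({(1, 1), (0, π ^ k)} : Set (O × O)))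
        (hSx : (α * x.1, β * x.2) ∈ Submodule.span O ({(1, 1), (0, π ^ k)} : Set (O × O))),
        ((e ⟨(α * x.1, β * x.2), hSx⟩ : O × O) =
          (α * (e ⟨x, hx⟩ : O × O).1, β * (e ⟨x, hx⟩ : O × O).2))) ↔
      k = k' := by
  constructor
  · rintro ⟨e, He⟩
    obtain ⟨c, hc⟩ := hk
    have hcne : c ≠ 0 := by
      rintro rfl
      apply hαβ
      have : β - α = 0 := by rw [hc]; ring
      linear_combination -this
    have h1 : ((1 : O), (1 : O)) ∈ Submodule.span O ({(1, 1), (0, π ^ k)} : Set (O × O)) :=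
      Submodule.subset_span (by left; rfl)
    have h2 : ((0 : O), π ^ k) ∈ Submodule.span O ({(1, 1), (0, π ^ k)} : Set (O × O)) :=
      Submodule.subset_span (by right; rfl)
    have h1' : ((1 : O), (1 : O)) ∈ Submodule.span O ({(1, 1), (0, π ^ k')} : Set (O × O)) :=
      Submodule.subset_span (by left; rfl)
    have h2' : ((0 : O), π ^ k') ∈ Submodule.span O ({(1, 1), (0, π ^ k')} : Set (O × O)) :=
      Submodule.subset_span (by right; rfl)
    have hS1 : ((α * (1 : O), β * (1 : O)) : O × O) ∈
        Submodule.span O ({(1, 1), (0, π ^ k)} : Set (O × O)) :=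
      Submodule.mem_span_pair.mpr ⟨α, c, by
        simp only [Prod.smul_mk, smul_eq_mul, Prod.mk_add_mk, Prod.mk.injEq]
        exact ⟨by ring, by linear_combination -hc⟩⟩
    obtain ⟨a, b, hab⟩ : ∃ a b : O, ((e ⟨(1, 1), h1⟩ : _) : O × O) = (a, b) := ⟨_, _, rfl⟩
    obtain ⟨d, f, hdf⟩ : ∃ d f : O, ((e ⟨(0, π ^ k), h2⟩ : _) : O × O) = (d, f) := ⟨_, _, rfl⟩
    have key1 : (⟨(α * (1 : O), β * (1 : O)), hS1⟩ :
        Submodule.span O ({(1, 1), (0, π ^ k)} : Set (O × O)))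
        = α • (⟨(1, 1), h1⟩ : Submodule.span O ({(1, 1), (0, π ^ k)} : Set (O × O)))
          + c • (⟨(0, π ^ k), h2⟩ : Submodule.span O ({(1, 1), (0, π ^ k)} : Set (O × O))) := by
      apply Subtype.ext
      simp only [Submodule.coe_add, SetLike.val_smul, Prod.smul_mk, smul_eq_mul,
        Prod.mk_add_mk, Prod.mk.injEq]
      exact ⟨by ring, by linear_combination hc⟩
    have hH1 := He (1, 1) h1 hS1
    rw [key1, map_add, map_smul, map_smul] at hH1
    simp only [Submodule.coe_add, SetLike.val_smul, hab, hdf, Prod.smul_mk, smul_eq_mul,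
      Prod.mk_add_mk, Prod.mk.injEq] at hH1
    obtain ⟨heq1, heq2⟩ := hH1
    have hd0 : d = 0 := by
      have h5 : c * d = 0 := by linear_combination heq1
      rcases mul_eq_zero.mp h5 with h | h
      · exact absurd h hcne
      · exact h
    have hfb : f = π ^ k * b := by
      have h3 : c * f = c * (π ^ k * b) := by linear_combination heq2 + b * hc
      exact mul_left_cancel₀ hcne h3
    -- membership of the images in M(k') gives divisibility constraints
    obtain ⟨m, n, hmn⟩ := Submodule.mem_span_pair.mp
      (e ⟨(1, 1), h1⟩ : Submodule.span O ({(1, 1), (0, π ^ k')} : Set (O × O))).2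
    rw [hab] at hmn
    simp only [Prod.smul_mk, smul_eq_mul, Prod.mk_add_mk, Prod.mk.injEq] at hmn
    have hba : π ^ k' ∣ b - a := ⟨n, by linear_combination hmn.1 - hmn.2⟩
    obtain ⟨m2, n2, hmn2⟩ := Submodule.mem_span_pair.mp
      (e ⟨(0, π ^ k), h2⟩ : Submodule.span O ({(1, 1), (0, π ^ k')} : Set (O × O))).2
    rw [hdf] at hmn2
    simp only [Prod.smul_mk, smul_eq_mul, Prod.mk_add_mk, Prod.mk.injEq] at hmn2
    have hm2 : m2 = 0 := by linear_combination hmn2.1 + hd0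
    have hdvdf : π ^ k' ∣ f := ⟨n2, by linear_combination -hmn2.2 + hm2⟩
    -- surjectivity: any element of M(k') is (x*a + y*d, x*b + y*f)
    have preim : ∀ (z : O × O) (hz : z ∈
        Submodule.span O ({(1, 1), (0, π ^ k')} : Set (O × O))), ∃ x y : O,
        (x * a + y * d, x * b + y * f) = z := by
      intro z hz
      obtain ⟨x, y, hxy⟩ := Submodule.mem_span_pair.mp (e.symm ⟨z, hz⟩).2
      refine ⟨x, y, ?_⟩
      have happ : e (e.symm ⟨z, hz⟩) = ⟨z, hz⟩ := e.apply_symm_apply _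
      have h4 : e.symm ⟨z, hz⟩ = x • (⟨(1, 1), h1⟩ :
          Submodule.span O ({(1, 1), (0, π ^ k)} : Set (O × O)))
          + y • (⟨(0, π ^ k), h2⟩ :
          Submodule.span O ({(1, 1), (0, π ^ k)} : Set (O × O))) := by
        apply Subtype.ext
        simpa using hxy.symm
      rw [h4, map_add, map_smul, map_smul] at happ
      have h6 := congrArg (Subtype.val) happ
      simp only [Submodule.coe_add, SetLike.val_smul, hab, hdf, Prod.smul_mk, smul_eq_mul,
        Prod.mk_add_mk] at h6
      exact h6
    obtain ⟨x, y, hxy⟩ := preim (1, 1) h1'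
    obtain ⟨x', y', hxy'⟩ := preim (0, π ^ k') h2'
    rw [Prod.mk.injEq] at hxy hxy'
    have haunit : IsUnit a := by
      refine IsUnit.of_mul_eq_one (a := a) x ?_
      linear_combination hxy.1 - y * hd0
    have hx'0 : x' = 0 := by
      have h7 : x' * a = 0 := by linear_combination hxy'.1 - y' * hd0
      rcases mul_eq_zero.mp h7 with h | h
      · exact h
      · exact absurd (h ▸ haunit) (by simp)
    have hy'f : y' * (π ^ k * b) = π ^ k' := by
      linear_combination hxy'.2 - b * hx'0 - y' * hfb
    have hπ0 : π ≠ 0 := hπ.ne_zero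
    have hπu : ¬IsUnit π := hπ.not_isUnit
    have hkk' : k ≤ k' := by
      have h8 : (π : O) ^ k ∣ π ^ k' := ⟨b * y', by rw [← hy'f]; ring⟩
      exact (pow_dvd_pow_iff hπ0 hπu).mp h8
    have hk'k : k' ≤ k := by
      rcases Nat.eq_zero_or_pos k' with h0 | hpos
      · omega
      · have hnb : ¬ π ∣ b := by
          intro hdvd
          have hπdvd : π ∣ b - a := dvd_trans (dvd_pow_self π hpos.ne') hba
          have hπa : π ∣ a := by
            have := dvd_sub hdvd hπdvd
            simpa using this
          exact hπu (isUnit_of_dvd_unit hπa haunit)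
        have hdvd2 : π ^ k' ∣ π ^ k * b := by rw [← hfb]; exact hdvdf
        have h9 := hπ.prime.pow_dvd_of_dvd_mul_right k' hnb hdvd2
        exact (pow_dvd_pow_iff hπ0 hπu).mp h9
    omega
  · rintro rfl
    refine ⟨LinearEquiv.refl O _, ?_⟩
    intro x hx hSx
    simp [LinearEquiv.refl_apply]
end

section
/- Let M be a finitely generated torsion Λ_E-module, free as an O-module, with char(M) = ((S−α)(S−β)) where α ≠ β ∈ πO. Then M is isomorphic as a Λ_E-module to M(k) for some integer k with 0 ≤ k ≤ ord(β−α). -/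
open Polynomial Matrix

/-- Primitivization in a DVR: a not-both-zero pair is `π^n` times a pair with a unit entry. -/
private lemma prim_pair {O : Type*} [CommRing O] [IsDomain O] [IsDiscreteValuationRing O]
    {π : O} (hπ : Irreducible π) (x y : O) (h : ¬(x = 0 ∧ y = 0)) :
    ∃ (n : ℕ) (p q : O), (IsUnit p ∨ IsUnit q) ∧ x = π ^ n * p ∧ y = π ^ n * q := by
  by_cases hx : x = 0
  · have hy : y ≠ 0 := fun hy => h ⟨hx, hy⟩
    obtain ⟨n, u, hu⟩ := IsDiscreteValuationRing.eq_unit_mul_pow_irreducible hy hπ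
    exact ⟨n, 0, u, Or.inr u.isUnit, by rw [hx, mul_zero], by rw [hu]; ring⟩
  · by_cases hy : y = 0
    · obtain ⟨n, u, hu⟩ := IsDiscreteValuationRing.eq_unit_mul_pow_irreducible hx hπ
      exact ⟨n, u, 0, Or.inl u.isUnit, by rw [hu]; ring, by rw [hy, mul_zero]⟩
    · obtain ⟨m, u, hu⟩ := IsDiscreteValuationRing.eq_unit_mul_pow_irreducible hx hπ
      obtain ⟨n, v, hv⟩ := IsDiscreteValuationRing.eq_unit_mul_pow_irreducible hy hπ
      rcases le_total m n with hmn | hmn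
      · refine ⟨m, u, v * π ^ (n - m), Or.inl u.isUnit, by rw [hu]; ring, ?_⟩
        have hpw : π ^ m * π ^ (n - m) = π ^ n := by rw [← pow_add]; congr 1; omega
        rw [hv, ← hpw]; ring
      · refine ⟨n, u * π ^ (m - n), v, Or.inr v.isUnit, ?_, by rw [hv]; ring⟩
        have hpw : π ^ n * π ^ (m - n) = π ^ m := by rw [← pow_add]; congr 1; omega
        rw [hu, ← hpw]; ring

/-- Sumida, existence: let `M` be a finitely generated torsion
`Λ_E`-module, free as an `O`-module, with `char(M) = ((S−α)(S−β))`, `α ≠ β ∈ πO`.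
The `Λ_E`-structure is encoded by the `O`-linear action `φ` of `S`; since `M` is
`O`-free of finite rank, the characteristic ideal is generated by the
characteristic polynomial of `φ`.  Then `M` is isomorphic as a `Λ_E`-module
(i.e. by an `O`-linear isomorphism commuting with the `S`-actions) to
`M(k) = ⟨(1,1),(0,π^k)⟩_O ⊂ O[[S]]/(S−α) ⊕ O[[S]]/(S−β)` for some
`0 ≤ k ≤ ord(β−α)`. -/
theorem stmt4 (O : Type*) [CommRing O] [IsDomain O] [IsDiscreteValuationRing O]
    (π : O) (hπ : Irreducible π) (α β : O) (hα : π ∣ α) (hβ : π ∣ β) (hαβ : α ≠ β)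
    (M : Type*) [AddCommGroup M] [Module O M] [Module.Free O M] [Module.Finite O M]
    (φ : M →ₗ[O] M)
    (hchar : LinearMap.charpoly φ =
      (Polynomial.X - Polynomial.C α) * (Polynomial.X - Polynomial.C β)) :
    ∃ k : ℕ, (π ^ k : O) ∣ β - α ∧
      ∃ e : M ≃ₗ[O] (Submodule.span O ({(1, 1), (0, π ^ k)} : Set (O × O))),
        ∀ x : M, ((e (φ x) : O × O) = (α * (e x : O × O).1, β * (e x : O × O).2)) := by
  classical
  have hπ0 : π ≠ 0 := hπ.ne_zero
  have hσ : β - α ≠ 0 := sub_ne_zero.mpr (Ne.symm hαβ)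
  -- Step 1: finrank = 2, choose a basis, move to a 2×2 matrix.
  have hnd : (LinearMap.charpoly φ).natDegree = 2 := by rw [hchar]; compute_degree!
  have hrank : Module.finrank O M = 2 := by rw [← LinearMap.charpoly_natDegree φ, hnd]
  have hcard : Fintype.card (Module.Free.ChooseBasisIndex O M) = 2 := by
    rw [← Module.finrank_eq_card_chooseBasisIndex, hrank]
  let b : Module.Basis (Fin 2) O M :=
    (Module.Free.chooseBasis O M).reindex (Fintype.equivFinOfCardEq hcard)
  set A := LinearMap.toMatrix b b φ with hAdef
  have hAchar : A.charpoly = (X - C α) * (X - C β) := by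
    rw [hAdef, LinearMap.charpoly_toMatrix, hchar]
  have hexp : ((X - C α) * (X - C β) : O[X]) = X ^ 2 - C (α + β) * X + C (α * β) := by
    rw [C_add, C_mul]; ring
  have htr : A 0 0 + A 1 1 = α + β := by
    have h1 := Matrix.trace_eq_neg_charpoly_coeff A
    rw [hAchar, hexp] at h1
    simp only [Fintype.card_fin, Matrix.trace_fin_two] at h1
    rw [h1]
    simp [coeff_X_pow]
  have hdet : A 0 0 * A 1 1 - A 0 1 * A 1 0 = α * β := by
    have h1 := Matrix.det_eq_sign_charpoly_coeff A
    rw [hAchar, hexp] at h1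
    simp only [Fintype.card_fin, Matrix.det_fin_two] at h1
    rw [h1]
    simp [coeff_X]
  set a := A 0 0 with ha
  set b2 := A 0 1 with hb2
  set c2 := A 1 0 with hc2
  set d2 := A 1 1 with hd2
  -- Step 2: find a primitive β-eigenvector (p, q).
  have heigvec : ∃ p q : O, (IsUnit p ∨ IsUnit q) ∧
      a * p + b2 * q = β * p ∧ c2 * p + d2 * q = β * q := by
    by_cases h1 : b2 = 0 ∧ β - a = 0
    · by_cases h2 : β - d2 = 0 ∧ c2 = 0
      · exact absurd (by linear_combination -htr - h1.2 - h2.1) hαβ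
      · obtain ⟨n, p, q, hu, hx, hy⟩ := prim_pair hπ (β - d2) c2 h2
        have hrow1 : a * (β - d2) + b2 * c2 = β * (β - d2) := by
          linear_combination β * htr - hdet
        have hrow2 : c2 * (β - d2) + d2 * c2 = β * c2 := by ring
        refine ⟨p, q, hu, ?_, ?_⟩
        · apply mul_left_cancel₀ (pow_ne_zero n hπ0)
          linear_combination hrow1 + (β - a) * hx - b2 * hy
        · apply mul_left_cancel₀ (pow_ne_zero n hπ0)
          linear_combination hrow2 + (β - d2) * hy - c2 * hx
    · obtain ⟨n, p, q, hu, hx, hy⟩ := prim_pair hπ b2 (β - a) h1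
      have hrow1 : a * b2 + b2 * (β - a) = β * b2 := by ring
      have hrow2 : c2 * b2 + d2 * (β - a) = β * (β - a) := by
        linear_combination β * htr - hdet
      refine ⟨p, q, hu, ?_, ?_⟩
      · apply mul_left_cancel₀ (pow_ne_zero n hπ0)
        linear_combination hrow1 + (β - a) * hx - b2 * hy
      · apply mul_left_cancel₀ (pow_ne_zero n hπ0)
        linear_combination hrow2 + (β - d2) * hy - c2 * hx
  obtain ⟨p, q, hpq, heig0, heig1⟩ := heigvec
  -- Bezout coefficients for the primitive vector.
  obtain ⟨p', q', hbez⟩ : ∃ p' q' : O, p * p' + q * q' = 1 := by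
    rcases hpq with h | h
    · obtain ⟨w, hw⟩ := h
      exact ⟨(↑w⁻¹ : O), 0, by rw [← hw]; simpa using w.mul_inv⟩
    · obtain ⟨w, hw⟩ := h
      exact ⟨0, (↑w⁻¹ : O), by rw [← hw]; simpa using w.mul_inv⟩
  -- Step 3: the complementary vector e = (q', -p'); z := A e - α e lies in the eigenline.
  set z0 : O := a * q' - b2 * p' - α * q' with hz0def
  set z1 : O := c2 * q' - d2 * p' + α * p' with hz1def
  have hrowz1 : (a - β) * z0 + b2 * z1 = 0 := by
    rw [hz0def, hz1def]
    linear_combination (q' * a - p' * b2) * htr - q' * hdet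
  have hrowz2 : c2 * z0 + (d2 - β) * z1 = 0 := by
    rw [hz0def, hz1def]
    linear_combination (q' * c2 - p' * d2) * htr + p' * hdet
  -- z is proportional to (p, q)
  have hD : z0 * q = z1 * p := by
    by_cases hab : a = β
    · by_cases hcz : c2 = 0
      · have hd2a : d2 = α := by linear_combination htr - hab
        have hq0 : q = 0 := by
          have h1 : (α - β) * q = 0 := by
            linear_combination heig1 - hcz * p - q * hd2a
          rcases mul_eq_zero.mp h1 with h | h
          · exact absurd (by linear_combination h) hαβ
          · exact h
        have hz10 : z1 = 0 := by
          have h1 : (α - β) * z1 = 0 := by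
            linear_combination hrowz2 - z0 * hcz - z1 * hd2a
          rcases mul_eq_zero.mp h1 with h | h
          · exact absurd (by linear_combination h) hαβ
          · exact h
        rw [hq0, hz10]; ring
      · apply mul_left_cancel₀ hcz
        linear_combination q * hrowz2 - z1 * heig1
    · apply mul_left_cancel₀ (sub_ne_zero.mpr hab)
      linear_combination q * hrowz1 - z1 * heig0
  set μ : O := p' * z0 + q' * z1 with hμdef
  have hzp : z0 = μ * p := by
    rw [hμdef]
    linear_combination z0 * hbez.symm + q' * hD
  have hzq : z1 = μ * q := by
    rw [hμdef]
    linear_combination z1 * hbez.symm - p' * hD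
  -- Step 4: normal-form scalars u, t, c, k.
  obtain ⟨u, t, c, k, hu, hc, hkc⟩ :
      ∃ (u t c : O) (k : ℕ), IsUnit u ∧ u * μ + t * (β - α) = c ∧ π ^ k * c = β - α := by
    by_cases hμ0 : μ = 0
    · exact ⟨1, 1, β - α, 0, isUnit_one, by rw [hμ0]; ring, by ring⟩
    · obtain ⟨m, u₀, hμe⟩ := IsDiscreteValuationRing.eq_unit_mul_pow_irreducible hμ0 hπ
      by_cases hdvd : π ^ m ∣ (β - α)
      · obtain ⟨s, hs⟩ := hdvd
        have hs0 : s ≠ 0 := by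
          rintro rfl
          rw [mul_zero] at hs
          exact hσ hs
        obtain ⟨k, u₁, hse⟩ := IsDiscreteValuationRing.eq_unit_mul_pow_irreducible hs0 hπ
        refine ⟨(↑u₁ : O) * ↑u₀⁻¹, 0, (↑u₁ : O) * π ^ m, k, (u₁ * u₀⁻¹).isUnit, ?_, ?_⟩
        · rw [hμe]
          have h2 : (↑u₀⁻¹ : O) * ↑u₀ = 1 := u₀.inv_mul
          linear_combination ((u₁ : O) * π ^ m) * h2
        · rw [hs, hse]; ring
      · obtain ⟨e, u₂, hσe⟩ := IsDiscreteValuationRing.eq_unit_mul_pow_irreducible hσ hπ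
        have hem : e < m := by
          by_contra hle
          push_neg at hle
          refine hdvd ⟨(↑u₂ : O) * π ^ (e - m), ?_⟩
          have hpw : π ^ m * π ^ (e - m) = π ^ e := by rw [← pow_add]; congr 1; omega
          rw [hσe, ← hpw]; ring
        refine ⟨1, 1 - ↑u₀ * π ^ (m - e) * ↑u₂⁻¹, β - α, 0, isUnit_one, ?_, by ring⟩
        have h2 : (↑u₂⁻¹ : O) * ↑u₂ = 1 := u₂.inv_mul
        have hpw : π ^ (m - e) * π ^ e = π ^ m := by rw [← pow_add]; congr 1; omega
        rw [hμe, hσe]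
        linear_combination (-(↑u₀ : O)) * hpw - ((u₀ : O) * π ^ (m - e) * π ^ e) * h2
  -- Step 5: assemble the isomorphism.
  obtain ⟨uu, huu⟩ := hu
  set vinv : O := (↑uu⁻¹ : O) with hvinvdef
  have hvu : vinv * u = 1 := by rw [hvinvdef, ← huu]; exact_mod_cast uu.inv_mul
  set P : Matrix (Fin 2) (Fin 2) O := !![u * q' + t * p, p; t * q - u * p', q] with hPdef
  set Pinv : Matrix (Fin 2) (Fin 2) O :=
    !![vinv * q, -(vinv * p); vinv * (u * p' - t * q), vinv * (u * q' + t * p)] with hPinvdef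
  set B : Matrix (Fin 2) (Fin 2) O := !![α, 0; c, β] with hBdef
  have hPinvP : Pinv * P = 1 := by
    rw [hPinvdef, hPdef]
    ext i j
    fin_cases i <;> fin_cases j <;>
      simp [Matrix.mul_apply, Fin.sum_univ_two] <;>
      first
      | linear_combination (vinv * u) * hbez + hvu
      | linear_combination (-(vinv * u)) * hbez - hvu
      | ring
  have hPPinv : P * Pinv = 1 := by
    rw [hPinvdef, hPdef]
    ext i j
    fin_cases i <;> fin_cases j <;>
      simp [Matrix.mul_apply, Fin.sum_univ_two] <;>
      first
      | linear_combination (vinv * u) * hbez + hvu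
      | linear_combination (-(vinv * u)) * hbez - hvu
      | ring
  have hAP : A * P = P * B := by
    rw [hPdef, hBdef]
    ext i j
    fin_cases i <;> fin_cases j <;>
      simp [Matrix.mul_apply, Fin.sum_univ_two] <;>
      try simp only [← ha, ← hb2, ← hc2, ← hd2]
    · linear_combination (-u) * hz0def + u * hzp + t * heig0 + p * hc
    · linear_combination heig0
    · linear_combination (-u) * hz1def + u * hzq + t * heig1 + q * hc
    · linear_combination heig1
  have hBPinv : Pinv * A = B * Pinv := by
    calc Pinv * A = Pinv * A * (P * Pinv) := by rw [hPPinv, mul_one]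
      _ = Pinv * (A * P) * Pinv := by rw [← mul_assoc, mul_assoc Pinv A P]
      _ = Pinv * (P * B) * Pinv := by rw [hAP]
      _ = (Pinv * P) * B * Pinv := by rw [← mul_assoc Pinv P B]
      _ = B * Pinv := by rw [hPinvP, one_mul]
  -- the linear map realizing the span as image of coordinates
  set fwd : (Fin 2 → O) →ₗ[O] O × O :=
    { toFun := fun y => (y 0, y 0 + π ^ k * y 1)
      map_add' := by intro y z; simp [Prod.ext_iff]; ring
      map_smul' := by intro r y; simp [Prod.ext_iff]; ring } with hfwddef
  have hfwdapp : ∀ y : Fin 2 → O, fwd y = (y 0, y 0 + π ^ k * y 1) := fun y => rfl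
  have hinj : Function.Injective fwd := by
    intro y z h
    rw [hfwdapp, hfwdapp, Prod.ext_iff] at h
    have h2 : y 1 = z 1 := by
      apply mul_left_cancel₀ (pow_ne_zero k hπ0)
      linear_combination h.2 - h.1
    funext i
    fin_cases i
    · exact h.1
    · exact h2
  have hrange : LinearMap.range fwd =
      Submodule.span O ({(1, 1), (0, π ^ k)} : Set (O × O)) := by
    apply le_antisymm
    · rintro _ ⟨y, rfl⟩
      have hdecomp : fwd y = y 0 • ((1 : O), (1 : O)) + y 1 • ((0 : O), π ^ k) := by
        rw [hfwdapp, Prod.ext_iff]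
        constructor <;> simp <;> ring
      rw [hdecomp]
      exact add_mem
        (Submodule.smul_mem _ _ (Submodule.subset_span (by simp)))
        (Submodule.smul_mem _ _ (Submodule.subset_span (by simp)))
    · rw [Submodule.span_le]
      rintro x hx
      simp only [Set.mem_insert_iff, Set.mem_singleton_iff] at hx
      rcases hx with rfl | rfl
      · exact ⟨![1, 0], by rw [hfwdapp]; simp⟩
      · exact ⟨![0, 1], by rw [hfwdapp]; simp⟩
  let PinvL : (Fin 2 → O) ≃ₗ[O] (Fin 2 → O) :=
    LinearEquiv.ofLinear (Matrix.toLin' Pinv) (Matrix.toLin' P)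
      (by rw [← Matrix.toLin'_mul, hPinvP, Matrix.toLin'_one])
      (by rw [← Matrix.toLin'_mul, hPPinv, Matrix.toLin'_one])
  let eN : (Fin 2 → O) ≃ₗ[O] (Submodule.span O ({(1, 1), (0, π ^ k)} : Set (O × O))) :=
    (LinearEquiv.ofInjective fwd hinj).trans (LinearEquiv.ofEq _ _ hrange)
  let e : M ≃ₗ[O] (Submodule.span O ({(1, 1), (0, π ^ k)} : Set (O × O))) :=
    (b.equivFun.trans PinvL).trans eN
  refine ⟨k, ⟨c, hkc.symm⟩, e, ?_⟩
  intro x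
  have hE : ∀ m : M, ((e m : O × O)) = fwd (Pinv.mulVec (b.equivFun m)) := by
    intro m
    rfl
  have xveq : (b.equivFun (φ x) : Fin 2 → O) = A.mulVec (b.equivFun x) := by
    rw [Module.Basis.equivFun_apply, Module.Basis.equivFun_apply, hAdef,
      LinearMap.toMatrix_mulVec_repr]
  rw [hE, hE, xveq, Matrix.mulVec_mulVec, hBPinv, ← Matrix.mulVec_mulVec]
  set w : Fin 2 → O := Pinv.mulVec (b.equivFun x) with hwdef
  have hB0 : B.mulVec w 0 = α * w 0 := by
    rw [hBdef]
    simp [Matrix.mulVec, dotProduct, Fin.sum_univ_two]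
  have hB1 : B.mulVec w 1 = c * w 0 + β * w 1 := by
    rw [hBdef]
    simp [Matrix.mulVec, dotProduct, Fin.sum_univ_two]
  rw [hfwdapp, hfwdapp, Prod.ext_iff]
  refine ⟨by rw [hB0], ?_⟩
  rw [hB0, hB1]
  linear_combination (w 0) * hkc
end

section
/- Let M be a finitely generated torsion O[[S]]-module with no nontrivial finite submodule and char(M) = ((S−α)(S−β)) with α ≠ β ∈ πO, and suppose M ≅ M(k). Then M(k)/S·M(k) ≅ O/αO ⊕ O/βO if ord(β−α) − k ≥ min(ord α, ord β), and M(k)/S·M(k) ≅ O/((β−α)π^{−k})O ⊕ O/(αβ·π^{k}/(β−α))O if ord(β−α) − k < min(ord α, ord β). -/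
private lemma dvd_of_emult_le {O : Type*} [CommRing O] [IsDomain O] [IsDiscreteValuationRing O]
    {π : O} (hπ : Irreducible π) {a b : O}
    (h : emultiplicity π a ≤ emultiplicity π b) : a ∣ b := by
  have hprime : Prime π := (UniqueFactorizationMonoid.irreducible_iff_prime).1 hπ
  by_cases hb : b = 0
  · exact hb ▸ dvd_zero a
  by_cases ha : a = 0
  · exfalso
    obtain ⟨n, hn⟩ := IsDiscreteValuationRing.associated_pow_irreducible hb hπ
    rw [ha, emultiplicity_zero, emultiplicity_eq_of_associated_right hn,
      emultiplicity_pow_self_of_prime hprime, top_le_iff] at h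
    exact (WithTop.coe_ne_top) h
  obtain ⟨m, hm⟩ := IsDiscreteValuationRing.associated_pow_irreducible ha hπ
  obtain ⟨n, hn⟩ := IsDiscreteValuationRing.associated_pow_irreducible hb hπ
  rw [emultiplicity_eq_of_associated_right hm, emultiplicity_eq_of_associated_right hn,
    emultiplicity_pow_self_of_prime hprime, emultiplicity_pow_self_of_prime hprime] at h
  exact hm.dvd.trans ((pow_dvd_pow π (by exact_mod_cast h)).trans hn.symm.dvd)

private lemma quotSpanPair {O : Type*} [CommRing O] (r u t : O) :
    Nonempty (((O × O) ⧸ Submodule.span O ({(r, r * u), (0, t)} : Set (O × O))) ≃ₗ[O]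
      ((O ⧸ Ideal.span {r}) × (O ⧸ Ideal.span {t}))) := by
  set F : (O × O) →ₗ[O] (O ⧸ Ideal.span {r}) × (O ⧸ Ideal.span {t}) :=
    LinearMap.prod ((Ideal.span {r}).mkQ.comp (LinearMap.fst O O O))
      ((Ideal.span {t}).mkQ.comp ((LinearMap.snd O O O) - u • (LinearMap.fst O O O))) with hF
  have hFapp : ∀ p : O × O, F p =
      (Submodule.Quotient.mk p.1, Submodule.Quotient.mk (p.2 - u * p.1)) := fun p => rfl
  have hsurj : Function.Surjective F := by
    rintro ⟨x, y⟩
    obtain ⟨a, rfl⟩ := Submodule.mkQ_surjective _ x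
    obtain ⟨b, rfl⟩ := Submodule.mkQ_surjective _ y
    refine ⟨(a, b + u * a), ?_⟩
    rw [hFapp]
    simp
  have hker : LinearMap.ker F = Submodule.span O ({(r, r * u), (0, t)} : Set (O × O)) := by
    apply le_antisymm
    · rintro ⟨x, y⟩ hxy
      rw [LinearMap.mem_ker, hFapp, Prod.mk_eq_zero, Submodule.Quotient.mk_eq_zero,
        Submodule.Quotient.mk_eq_zero, Ideal.mem_span_singleton, Ideal.mem_span_singleton] at hxy
      obtain ⟨⟨s, hs⟩, ⟨w, hw⟩⟩ := hxy
      refine Submodule.mem_span_pair.2 ⟨s, w, ?_⟩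
      rw [Prod.smul_mk, Prod.smul_mk, Prod.mk_add_mk, Prod.mk.injEq]
      constructor
      · rw [smul_eq_mul, smul_eq_mul, mul_zero, add_zero, mul_comm]; exact hs.symm
      · rw [smul_eq_mul, smul_eq_mul]; linear_combination u * hs.symm - hw
    · rw [Submodule.span_le]
      rintro z hz
      simp only [Set.mem_insert_iff, Set.mem_singleton_iff] at hz
      rcases hz with rfl | rfl <;>
        rw [SetLike.mem_coe, LinearMap.mem_ker, hFapp, Prod.mk_eq_zero,
          Submodule.Quotient.mk_eq_zero, Submodule.Quotient.mk_eq_zero,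
          Ideal.mem_span_singleton, Ideal.mem_span_singleton]
      · exact ⟨dvd_rfl, by rw [show r * u - u * r = 0 by ring]; exact dvd_zero t⟩
      · exact ⟨dvd_zero r, by rw [show t - u * 0 = t by ring]⟩
  exact ⟨(Submodule.quotEquivOfEq _ _ hker.symm).trans (F.quotKerEquivOfSurjective hsurj)⟩

/-- coinvariants of `M(k)`, cf. [MOMO, Lemma 5.2]: let `O` be a DVR
with uniformizer `π` and valuation `ord = emultiplicity π`, `α ≠ β ∈ πO`,
`0 ≤ k ≤ ord(β−α)` and `c = (β−α)π^{−k}` (so `c·π^k = β−α`).  Let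
`M(k) = ⟨(1,1),(0,π^k)⟩_O ⊂ O ⊕ O` with `S·(a,b) = (αa, βb)`.  Then, as
`O`-modules,
`M(k)/S·M(k) ≅ O/αO ⊕ O/βO` if `ord(β−α) − k ≥ min(ord α, ord β)`, and
`M(k)/S·M(k) ≅ O/((β−α)π^{−k})O ⊕ O/(αβπ^k/(β−α))O` (where
`d·(β−α)π^{−k} = αβ`) if `ord(β−α) − k < min(ord α, ord β)`. -/
theorem stmt13 (O : Type*) [CommRing O] [IsDomain O] [IsDiscreteValuationRing O]
    (π : O) (hπ : Irreducible π) (α β : O) (hα : π ∣ α) (hβ : π ∣ β) (hαβ : α ≠ β)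
    (k : ℕ) (c : O) (hc : c * π ^ k = β - α) :
    (min (emultiplicity π α) (emultiplicity π β) ≤
        emultiplicity π (β - α) - (k : ℕ∞) →
      Nonempty
        (((Submodule.span O ({(1, 1), (0, π ^ k)} : Set (O × O))) ⧸
            (Submodule.comap
              (Submodule.span O ({(1, 1), (0, π ^ k)} : Set (O × O))).subtype
              (Submodule.map
                (((LinearMap.lsmul O O) α).prodMap ((LinearMap.lsmul O O) β))
                (Submodule.span O ({(1, 1), (0, π ^ k)} : Set (O × O)))))) ≃ₗ[O]
          (O ⧸ (Ideal.span {α} : Ideal O)) × (O ⧸ (Ideal.span {β} : Ideal O)))) ∧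
    (emultiplicity π (β - α) - (k : ℕ∞) <
        min (emultiplicity π α) (emultiplicity π β) →
      ∀ d : O, d * c = α * β →
      Nonempty
        (((Submodule.span O ({(1, 1), (0, π ^ k)} : Set (O × O))) ⧸
            (Submodule.comap
              (Submodule.span O ({(1, 1), (0, π ^ k)} : Set (O × O))).subtype
              (Submodule.map
                (((LinearMap.lsmul O O) α).prodMap ((LinearMap.lsmul O O) β))
                (Submodule.span O ({(1, 1), (0, π ^ k)} : Set (O × O)))))) ≃ₗ[O]
          (O ⧸ (Ideal.span {c} : Ideal O)) × (O ⧸ (Ideal.span {d} : Ideal O)))) := by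
  classical
  have hπ0 : π ≠ 0 := hπ.ne_zero
  have hπk : (π : O) ^ k ≠ 0 := pow_ne_zero _ hπ0
  have hprime : Prime π := (UniqueFactorizationMonoid.irreducible_iff_prime).1 hπ
  set sp := Submodule.span O ({(1, 1), (0, π ^ k)} : Set (O × O)) with hsp
  set T := ((LinearMap.lsmul O O) α).prodMap ((LinearMap.lsmul O O) β) with hT
  set N := Submodule.comap sp.subtype (Submodule.map T sp) with hNdef
  have hTapp : ∀ p : O × O, T p = (α * p.1, β * p.2) := fun p => rfl
  -- the parametrization ψ of sp
  set ψ : (O × O) →ₗ[O] (O × O) :=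
    LinearMap.prod (LinearMap.fst O O O)
      ((LinearMap.fst O O O) + (π ^ k) • (LinearMap.snd O O O)) with hψ
  have hψapp : ∀ p : O × O, ψ p = (p.1, p.1 + π ^ k * p.2) := fun p => rfl
  have hinj : Function.Injective ψ := by
    rintro ⟨a, b⟩ ⟨a', b'⟩ h
    simp only [hψapp, Prod.mk.injEq] at h
    obtain ⟨h1, h2⟩ := h
    subst h1
    exact Prod.ext rfl (mul_left_cancel₀ hπk (add_left_cancel h2))
  have hrange : LinearMap.range ψ = sp := by
    apply le_antisymm
    · rintro z ⟨⟨x, y⟩, rfl⟩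
      refine Submodule.mem_span_pair.2 ⟨x, y, ?_⟩
      rw [hψapp, Prod.smul_mk, Prod.smul_mk, Prod.mk_add_mk, Prod.mk.injEq]
      constructor
      · simp
      · simp [mul_comm]
    · rw [hsp, Submodule.span_le]
      rintro z hz
      simp only [Set.mem_insert_iff, Set.mem_singleton_iff] at hz
      rcases hz with rfl | rfl
      · exact ⟨(1, 0), by rw [hψapp]; simp⟩
      · exact ⟨(0, 1), by rw [hψapp]; simp⟩
  set e : (O × O) ≃ₗ[O] sp :=
    (LinearEquiv.ofInjective ψ hinj).trans (LinearEquiv.ofEq _ _ hrange) with he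
  set P := Submodule.span O ({(α, c), (0, β)} : Set (O × O)) with hP
  have hTsp : Submodule.map T sp = Submodule.span O
      ({(α, β), (0, β * π ^ k)} : Set (O × O)) := by
    rw [hsp, Submodule.map_span]
    congr 1
    rw [Set.image_insert_eq, Set.image_singleton, hTapp, hTapp]
    norm_num
  have hmapψP : Submodule.map ψ P = Submodule.map T sp := by
    rw [hP, Submodule.map_span, hTsp]
    congr 1
    rw [Set.image_insert_eq, Set.image_singleton, hψapp, hψapp]
    have e1 : ((α : O), α + π ^ k * c) = (α, β) := by
      rw [Prod.mk.injEq]; exact ⟨rfl, by linear_combination hc⟩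
    have e2 : ((0 : O), 0 + π ^ k * β) = ((0 : O), β * π ^ k) := by
      rw [Prod.mk.injEq]; exact ⟨rfl, by ring⟩
    rw [e1, e2]
  have hle : Submodule.map T sp ≤ sp := by
    rw [hTsp, hsp, Submodule.span_le]
    rintro z hz
    simp only [Set.mem_insert_iff, Set.mem_singleton_iff] at hz
    rcases hz with rfl | rfl
    · refine SetLike.mem_coe.2 (Submodule.mem_span_pair.2 ⟨α, c, ?_⟩)
      rw [Prod.smul_mk, Prod.smul_mk, Prod.mk_add_mk, Prod.mk.injEq]
      exact ⟨by simp, by simp only [smul_eq_mul]; linear_combination hc⟩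
    · refine SetLike.mem_coe.2 (Submodule.mem_span_pair.2 ⟨0, β, ?_⟩)
      rw [Prod.smul_mk, Prod.smul_mk, Prod.mk_add_mk, Prod.mk.injEq]
      exact ⟨by simp, by simp⟩
  have hNmap : Submodule.map sp.subtype N = Submodule.map T sp := by
    rw [hNdef, Submodule.map_comap_subtype]
    exact inf_eq_right.2 hle
  have hmapeP : P.map (e : (O × O) →ₗ[O] sp) = N := by
    apply Submodule.map_injective_of_injective (Submodule.injective_subtype sp)
    rw [hNmap, ← Submodule.map_comp]
    have : sp.subtype ∘ₗ (e : (O × O) →ₗ[O] sp) = ψ := LinearMap.ext fun x => rfl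
    rw [this]
    exact hmapψP
  have baseEquiv : (sp ⧸ N) ≃ₗ[O] ((O × O) ⧸ P) :=
    (Submodule.Quotient.equiv P N (e : (O × O) ≃ₗ[O] sp) hmapeP).symm
  have hc0 : c ≠ 0 := by
    rintro rfl
    rw [zero_mul] at hc
    exact hαβ (by linear_combination hc)
  have hsub : emultiplicity π (β - α) - (k : ℕ∞) = emultiplicity π c := by
    rw [← hc, emultiplicity_mul hprime, emultiplicity_pow_self_of_prime hprime]
    exact (ENat.addLECancellable_of_ne_top (WithTop.coe_ne_top)).add_tsub_cancel_right
  constructor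
  · intro hmin
    rw [hsub] at hmin
    rcases min_le_iff.1 hmin with h | h
    · obtain ⟨u, hu⟩ := dvd_of_emult_le hπ h
      obtain ⟨E⟩ := quotSpanPair (O := O) α u β
      have hPeq : P = Submodule.span O ({(α, α * u), (0, β)} : Set (O × O)) := by
        rw [hP, hu]
      exact ⟨baseEquiv.trans ((Submodule.quotEquivOfEq _ _ hPeq).trans E)⟩
    · obtain ⟨v, hv⟩ := dvd_of_emult_le hπ h
      subst hv
      obtain ⟨E⟩ := quotSpanPair (O := O) α 0 β
      have hPeq : P = Submodule.span O ({(α, α * 0), (0, β)} : Set (O × O)) := by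
        rw [hP]
        apply le_antisymm <;> rw [Submodule.span_le] <;> rintro z hz <;>
          simp only [Set.mem_insert_iff, Set.mem_singleton_iff] at hz
        · rcases hz with rfl | rfl
          · refine SetLike.mem_coe.2 (Submodule.mem_span_pair.2 ⟨1, v, ?_⟩)
            rw [Prod.smul_mk, Prod.smul_mk, Prod.mk_add_mk, Prod.mk.injEq]
            exact ⟨by simp, by simp only [smul_eq_mul]; ring⟩
          · refine SetLike.mem_coe.2 (Submodule.mem_span_pair.2 ⟨0, 1, ?_⟩)
            rw [Prod.smul_mk, Prod.smul_mk, Prod.mk_add_mk, Prod.mk.injEq]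
            exact ⟨by simp, by simp⟩
        · rcases hz with rfl | rfl
          · refine SetLike.mem_coe.2 (Submodule.mem_span_pair.2 ⟨1, -v, ?_⟩)
            rw [Prod.smul_mk, Prod.smul_mk, Prod.mk_add_mk, Prod.mk.injEq]
            exact ⟨by simp, by simp only [smul_eq_mul]; ring⟩
          · refine SetLike.mem_coe.2 (Submodule.mem_span_pair.2 ⟨0, 1, ?_⟩)
            rw [Prod.smul_mk, Prod.smul_mk, Prod.mk_add_mk, Prod.mk.injEq]
            exact ⟨by simp, by simp⟩
      exact ⟨baseEquiv.trans ((Submodule.quotEquivOfEq _ _ hPeq).trans E)⟩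
  · intro hlt d hd
    rw [hsub] at hlt
    obtain ⟨a', ha'⟩ := dvd_of_emult_le hπ (hlt.le.trans (min_le_left _ _))
    obtain ⟨b', hb'⟩ := dvd_of_emult_le hπ (hlt.le.trans (min_le_right _ _))
    have hd' : d = a' * (c * b') := by
      refine mul_right_cancel₀ hc0 ?_
      rw [hd, ha', hb']
      ring
    subst ha' hb' hd'
    have hmapsw : P.map ((LinearEquiv.prodComm O O O : (O × O) ≃ₗ[O] (O × O)) :
        (O × O) →ₗ[O] (O × O)) =
        Submodule.span O ({(c, c * a'), (0, a' * (c * b'))} : Set (O × O)) := by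
      rw [hP, Submodule.map_span]
      have himg : (LinearEquiv.prodComm O O O : (O × O) →ₗ[O] (O × O)) ''
          ({(c * a', c), (0, c * b')} : Set (O × O)) = {(c, c * a'), (c * b', 0)} := by
        rw [Set.image_insert_eq, Set.image_singleton]
        rfl
      rw [himg]
      apply le_antisymm <;> rw [Submodule.span_le] <;> rintro z hz <;>
        simp only [Set.mem_insert_iff, Set.mem_singleton_iff] at hz
      · rcases hz with rfl | rfl
        · refine SetLike.mem_coe.2 (Submodule.mem_span_pair.2 ⟨1, 0, ?_⟩)
          rw [Prod.smul_mk, Prod.smul_mk, Prod.mk_add_mk, Prod.mk.injEq]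
          exact ⟨by simp, by simp only [smul_eq_mul]; ring⟩
        · refine SetLike.mem_coe.2 (Submodule.mem_span_pair.2 ⟨b', -1, ?_⟩)
          rw [Prod.smul_mk, Prod.smul_mk, Prod.mk_add_mk, Prod.mk.injEq]
          exact ⟨by simp only [smul_eq_mul]; ring, by simp only [smul_eq_mul]; ring⟩
      · rcases hz with rfl | rfl
        · refine SetLike.mem_coe.2 (Submodule.mem_span_pair.2 ⟨1, 0, ?_⟩)
          rw [Prod.smul_mk, Prod.smul_mk, Prod.mk_add_mk, Prod.mk.injEq]
          exact ⟨by simp, by simp only [smul_eq_mul]; ring⟩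
        · refine SetLike.mem_coe.2 (Submodule.mem_span_pair.2 ⟨b', -1, ?_⟩)
          rw [Prod.smul_mk, Prod.smul_mk, Prod.mk_add_mk, Prod.mk.injEq]
          exact ⟨by simp only [smul_eq_mul]; ring, by simp only [smul_eq_mul]; ring⟩
    obtain ⟨E⟩ := quotSpanPair (O := O) c a' (a' * (c * b'))
    exact ⟨baseEquiv.trans ((Submodule.Quotient.equiv P _
      (LinearEquiv.prodComm O O O) hmapsw).trans E)⟩
end

section
/- With M(k) as above and A_K ⊗ O ≅ M(k)/S·M(k): if ord(α) = ord(β) and M(k)/S M(k) ≅ O/π^{N_1} ⊕ O/π^{N_2} with N_1 < N_2, then k > 0 and ord(β−α) − k < min(ord α, ord β). -/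
private lemma emult_aux {O : Type*} [CommRing O] [IsDomain O] {π : O} (hπ : Irreducible π)
    (u : Oˣ) (n : ℕ) : emultiplicity π ((u : O) * π ^ n) = n := by
  rw [emultiplicity_eq_coe]
  refine ⟨⟨u, mul_comm _ _⟩, ?_⟩
  rintro ⟨c, hc⟩
  have h2 : π ^ n * (u : O) = π ^ n * (π * c) := by
    rw [pow_succ] at hc; linear_combination hc
  have h3 := mul_left_cancel₀ (pow_ne_zero n hπ.ne_zero) h2
  exact hπ.not_isUnit (isUnit_of_mul_isUnit_left (h3 ▸ u.isUnit))

private lemma kill_aux {O : Type*} [CommRing O] {π : O} {a b : ℕ} (h : a ≤ b)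
    (w : O ⧸ (Ideal.span {π ^ a} : Ideal O)) : (π ^ b : O) • w = 0 := by
  obtain ⟨x, rfl⟩ := Submodule.Quotient.mk_surjective _ w
  rw [← Submodule.Quotient.mk_smul, Submodule.Quotient.mk_eq_zero, smul_eq_mul]
  exact Ideal.mem_span_singleton.mpr ((pow_dvd_pow π h).mul_right x)


private lemma no_iso_aux {O : Type*} [CommRing O] [IsDomain O] {π : O} (hπ : Irreducible π)
    {m N₁ N₂ : ℕ} (hm : 0 < m) (hN : N₁ < N₂)
    (F : ((O ⧸ (Ideal.span {π ^ m} : Ideal O)) × (O ⧸ (Ideal.span {π ^ m} : Ideal O))) ≃ₗ[O]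
      (O ⧸ (Ideal.span {π ^ N₁} : Ideal O)) × (O ⧸ (Ideal.span {π ^ N₂} : Ideal O))) :
    False := by
  -- Step A : N₂ ≤ m
  have hN₂m : N₂ ≤ m := by
    have h1 : (π ^ m : O) • F.symm (0, Submodule.Quotient.mk 1) = 0 :=
      Prod.ext (kill_aux le_rfl _) (kill_aux le_rfl _)
    have h2 := congrArg F h1
    rw [map_smul, F.apply_symm_apply, map_zero] at h2
    have h3 : (π ^ m : O) • (Submodule.Quotient.mk 1 : O ⧸ (Ideal.span {π ^ N₂} : Ideal O)) = 0 :=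
      congrArg Prod.snd h2
    rw [← Submodule.Quotient.mk_smul, Submodule.Quotient.mk_eq_zero, smul_eq_mul, mul_one,
      Ideal.mem_span_singleton] at h3
    exact (pow_dvd_pow_iff hπ.ne_zero hπ.not_isUnit).mp h3
  set r := m - 1 with hrdef
  have hrm : r + 1 = m := Nat.succ_pred_eq_of_pos hm
  have hN₁r : N₁ ≤ r := by omega
  obtain ⟨b₁, hb₁⟩ := Submodule.Quotient.mk_surjective _ (F (Submodule.Quotient.mk 1, 0)).2
  obtain ⟨b₂, hb₂⟩ := Submodule.Quotient.mk_surjective _ (F (0, Submodule.Quotient.mk 1)).2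
  set uu : (O ⧸ (Ideal.span {π ^ m} : Ideal O)) × (O ⧸ (Ideal.span {π ^ m} : Ideal O)) :=
    (Submodule.Quotient.mk (π ^ r), 0) with huudef
  set vv : (O ⧸ (Ideal.span {π ^ m} : Ideal O)) × (O ⧸ (Ideal.span {π ^ m} : Ideal O)) :=
    (0, Submodule.Quotient.mk (π ^ r)) with hvvdef
  have huu : uu = (π ^ r : O) • (Submodule.Quotient.mk 1, 0) := by
    refine Prod.ext ?_ ?_
    · show (Submodule.Quotient.mk (π ^ r) : O ⧸ (Ideal.span {π ^ m} : Ideal O)) = _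
      rw [show ((π ^ r : O) • ((Submodule.Quotient.mk 1, 0) :
        (O ⧸ (Ideal.span {π ^ m} : Ideal O)) × (O ⧸ (Ideal.span {π ^ m} : Ideal O)))).1
        = (π ^ r : O) • Submodule.Quotient.mk 1 from rfl,
        ← Submodule.Quotient.mk_smul, smul_eq_mul, mul_one]
    · show (0 : O ⧸ (Ideal.span {π ^ m} : Ideal O)) = (π ^ r : O) • 0
      rw [smul_zero]
  have hvv : vv = (π ^ r : O) • (0, Submodule.Quotient.mk 1) := by
    refine Prod.ext ?_ ?_
    · show (0 : O ⧸ (Ideal.span {π ^ m} : Ideal O)) = (π ^ r : O) • 0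
      rw [smul_zero]
    · show (Submodule.Quotient.mk (π ^ r) : O ⧸ (Ideal.span {π ^ m} : Ideal O)) = _
      rw [show ((π ^ r : O) • (((0 : O ⧸ (Ideal.span {π ^ m} : Ideal O)),
        (Submodule.Quotient.mk 1 : O ⧸ (Ideal.span {π ^ m} : Ideal O))))).2
        = (π ^ r : O) • Submodule.Quotient.mk 1 from rfl,
        ← Submodule.Quotient.mk_smul, smul_eq_mul, mul_one]
  have hFu : F uu = (0, (π ^ r : O) • Submodule.Quotient.mk b₁) := by
    rw [huu, map_smul]
    refine Prod.ext ?_ ?_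
    · exact kill_aux hN₁r _
    · show (π ^ r : O) • (F (Submodule.Quotient.mk 1, 0)).2 = _
      rw [hb₁]
  have hFv : F vv = (0, (π ^ r : O) • Submodule.Quotient.mk b₂) := by
    rw [hvv, map_smul]
    refine Prod.ext ?_ ?_
    · exact kill_aux hN₁r _
    · show (π ^ r : O) • (F (0, Submodule.Quotient.mk 1)).2 = _
      rw [hb₂]
  have hzero : F (b₂ • uu - b₁ • vv) = 0 := by
    rw [map_sub, map_smul, map_smul, hFu, hFv]
    refine Prod.ext (by simp) ?_
    show b₂ • ((π ^ r : O) • (Submodule.Quotient.mk b₁ : O ⧸ (Ideal.span {π ^ N₂} : Ideal O)))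
      - b₁ • ((π ^ r : O) • Submodule.Quotient.mk b₂) = 0
    rw [← Submodule.Quotient.mk_smul, ← Submodule.Quotient.mk_smul,
      ← Submodule.Quotient.mk_smul, ← Submodule.Quotient.mk_smul,
      ← Submodule.Quotient.mk_sub, Submodule.Quotient.mk_eq_zero]
    have h0 : b₂ • ((π ^ r : O) • b₁) - b₁ • ((π ^ r : O) • b₂) = 0 := by
      simp only [smul_eq_mul]; ring
    rw [h0]; exact zero_mem _
  have heq : b₂ • uu = b₁ • vv := by
    have := F.injective (by rw [hzero, map_zero] :
      F (b₂ • uu - b₁ • vv) = F 0)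
    exact sub_eq_zero.mp this
  have hsnd : b₁ • (Submodule.Quotient.mk (π ^ r) : O ⧸ (Ideal.span {π ^ m} : Ideal O)) = 0 := by
    have h := congrArg Prod.snd heq
    have h1 : (b₂ • uu).2 = (0 : O ⧸ (Ideal.span {π ^ m} : Ideal O)) := by
      rw [huudef]; show b₂ • (0 : O ⧸ (Ideal.span {π ^ m} : Ideal O)) = 0; rw [smul_zero]
    have h2 : (b₁ • vv).2 = b₁ • (Submodule.Quotient.mk (π ^ r) :
      O ⧸ (Ideal.span {π ^ m} : Ideal O)) := rfl
    rw [h1, h2] at h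
    exact h.symm
  rw [← Submodule.Quotient.mk_smul, Submodule.Quotient.mk_eq_zero, smul_eq_mul,
    Ideal.mem_span_singleton] at hsnd
  obtain ⟨c, hcc⟩ := hsnd
  have hb1 : b₁ = π * c := by
    refine mul_left_cancel₀ (pow_ne_zero r hπ.ne_zero) ?_
    rw [← hrm, pow_succ] at hcc
    linear_combination hcc
  have hFu0 : F uu = 0 := by
    rw [hFu]
    refine Prod.ext rfl ?_
    show (π ^ r : O) • (Submodule.Quotient.mk b₁ : O ⧸ (Ideal.span {π ^ N₂} : Ideal O)) = 0
    rw [← Submodule.Quotient.mk_smul, Submodule.Quotient.mk_eq_zero, smul_eq_mul, hb1]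
    refine Ideal.mem_span_singleton.mpr (dvd_trans (pow_dvd_pow π hN₂m) ⟨c, ?_⟩)
    rw [← hrm, pow_succ]; ring
  have huu0 : uu = 0 := F.injective (by rw [hFu0, map_zero])
  have hfst : (Submodule.Quotient.mk (π ^ r) : O ⧸ (Ideal.span {π ^ m} : Ideal O)) = 0 :=
    congrArg Prod.fst huu0
  rw [Submodule.Quotient.mk_eq_zero, Ideal.mem_span_singleton] at hfst
  have := (pow_dvd_pow_iff hπ.ne_zero hπ.not_isUnit).mp hfst
  omega

private lemma quot_equiv_aux {O : Type*} [CommRing O] [IsDomain O] (π : O) (hπ0 : π ≠ 0)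
    (α β : O) (k m : ℕ) (c : O) (hc : β - α = c * (β * π ^ k))
    (hIα : (Ideal.span {α} : Ideal O) = Ideal.span {π ^ m})
    (hIβ : (Ideal.span {β} : Ideal O) = Ideal.span {π ^ m}) :
    Nonempty ((Submodule.span O ({(1, 1), (0, π ^ k)} : Set (O × O)) ⧸
        (Submodule.comap (Submodule.span O ({(1, 1), (0, π ^ k)} : Set (O × O))).subtype
          (Submodule.map (((LinearMap.lsmul O O) α).prodMap ((LinearMap.lsmul O O) β))
            (Submodule.span O ({(1, 1), (0, π ^ k)} : Set (O × O)))))) ≃ₗ[O]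
      ((O ⧸ (Ideal.span {π ^ m} : Ideal O)) × (O ⧸ (Ideal.span {π ^ m} : Ideal O)))) := by
  set Nspan := Submodule.span O ({(1, 1), (0, π ^ k)} : Set (O × O)) with hNspan
  set f := (((LinearMap.lsmul O O) α).prodMap ((LinearMap.lsmul O O) β)) with hfdef
  set S' := Submodule.comap Nspan.subtype (Submodule.map f Nspan) with hS'
  let L : (O × O) →ₗ[O] (O × O) :=
    { toFun := fun p => (p.1, p.1 + π ^ k * p.2)
      map_add' := by intro p q; refine Prod.ext rfl ?_; dsimp; ring
      map_smul' := by intro r p; refine Prod.ext rfl ?_; dsimp; ring }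
  have hL : ∀ p : O × O, L p = (p.1, p.1 + π ^ k * p.2) := fun _ => rfl
  have hLinj : Function.Injective L := by
    intro p q h
    rw [hL, hL, Prod.mk.injEq] at h
    obtain ⟨h1, h2⟩ := h
    have h3 : π ^ k * p.2 = π ^ k * q.2 := by linear_combination h2 - h1
    exact Prod.ext h1 (mul_left_cancel₀ (pow_ne_zero k hπ0) h3)
  have hLrange : LinearMap.range L = Nspan := by
    apply le_antisymm
    · rintro x ⟨p, rfl⟩
      have hexp : L p = p.1 • ((1 : O), (1 : O)) + p.2 • ((0 : O), π ^ k) := by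
        rw [hL]
        refine Prod.ext ?_ ?_
        · simp
        · simp [mul_comm]
      rw [hexp]
      exact add_mem (Submodule.smul_mem _ _ (Submodule.subset_span (by simp)))
        (Submodule.smul_mem _ _ (Submodule.subset_span (by simp)))
    · rw [Submodule.span_le]
      rintro x hx
      simp only [Set.mem_insert_iff, Set.mem_singleton_iff] at hx
      rcases hx with rfl | rfl
      · exact ⟨(1, 0), by rw [hL]; refine Prod.ext rfl ?_; simp⟩
      · exact ⟨(0, 1), by rw [hL]; refine Prod.ext rfl ?_; simp⟩
  let E : (O × O) ≃ₗ[O] Nspan :=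
    (LinearEquiv.ofInjective L hLinj).trans (LinearEquiv.ofEq _ _ hLrange)
  have hE : ∀ p : O × O, (E p : O × O) = L p := fun _ => rfl
  set T := Submodule.span O ({(α, 0), (0, β)} : Set (O × O)) with hT
  have claim1 : Submodule.map L T = Submodule.map f Nspan := by
    have e1 : Submodule.map L T =
        Submodule.span O ({(α, α), (0, π ^ k * β)} : Set (O × O)) := by
      rw [hT, Submodule.map_span, Set.image_pair]
      have h1 : L (α, 0) = (α, α) := by rw [hL]; refine Prod.ext rfl ?_; simp
      have h2 : L (0, β) = (0, π ^ k * β) := by rw [hL]; refine Prod.ext rfl ?_; simp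
      rw [h1, h2]
    have e2 : Submodule.map f Nspan =
        Submodule.span O ({(α, β), (0, β * π ^ k)} : Set (O × O)) := by
      rw [hNspan, Submodule.map_span, Set.image_pair]
      have h1 : f (1, 1) = (α, β) := by simp [hfdef]
      have h2 : f (0, π ^ k) = (0, β * π ^ k) := by simp [hfdef]
      rw [h1, h2]
    rw [e1, e2]
    apply le_antisymm
    · rw [Submodule.span_le]
      rintro x hx
      simp only [Set.mem_insert_iff, Set.mem_singleton_iff] at hx
      rcases hx with rfl | rfl
      · have hrep : ((α, α) : O × O) = (1 : O) • ((α : O), β) + (-c) • ((0 : O), β * π ^ k) := by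
          simp only [Prod.smul_mk, Prod.mk_add_mk, smul_eq_mul, Prod.mk.injEq]
          constructor
          · ring
          · linear_combination -hc
        rw [hrep]
        exact add_mem (Submodule.smul_mem _ _ (Submodule.subset_span (by simp)))
          (Submodule.smul_mem _ _ (Submodule.subset_span (by simp)))
      · have hrep : ((0, π ^ k * β) : O × O) = (0 : O) • ((α : O), β) + (1 : O) • ((0 : O), β * π ^ k) := by
          simp only [Prod.smul_mk, Prod.mk_add_mk, smul_eq_mul, Prod.mk.injEq]
          constructor
          · ring
          · ring
        rw [hrep]
        exact add_mem (Submodule.smul_mem _ _ (Submodule.subset_span (by simp)))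
          (Submodule.smul_mem _ _ (Submodule.subset_span (by simp)))
    · rw [Submodule.span_le]
      rintro x hx
      simp only [Set.mem_insert_iff, Set.mem_singleton_iff] at hx
      rcases hx with rfl | rfl
      · have hrep : ((α, β) : O × O) = (1 : O) • ((α : O), α) + c • ((0 : O), π ^ k * β) := by
          simp only [Prod.smul_mk, Prod.mk_add_mk, smul_eq_mul, Prod.mk.injEq]
          constructor
          · ring
          · linear_combination hc
        rw [hrep]
        exact add_mem (Submodule.smul_mem _ _ (Submodule.subset_span (by simp)))
          (Submodule.smul_mem _ _ (Submodule.subset_span (by simp)))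
      · have hrep : ((0, β * π ^ k) : O × O) = (0 : O) • ((α : O), α) + (1 : O) • ((0 : O), π ^ k * β) := by
          simp only [Prod.smul_mk, Prod.mk_add_mk, smul_eq_mul, Prod.mk.injEq]
          constructor
          · ring
          · ring
        rw [hrep]
        exact add_mem (Submodule.smul_mem _ _ (Submodule.subset_span (by simp)))
          (Submodule.smul_mem _ _ (Submodule.subset_span (by simp)))
  have claim2 : Submodule.map (E : (O × O) →ₗ[O] Nspan) T = S' := by
    ext n
    simp only [Submodule.mem_map, Submodule.mem_comap, hS', Submodule.subtype_apply]
    constructor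
    · rintro ⟨t, ht, rfl⟩
      show ((E t : Nspan) : O × O) ∈ Submodule.map f Nspan
      rw [hE, ← claim1]
      exact Submodule.mem_map_of_mem ht
    · intro hn
      have hn' : (n : O × O) ∈ Submodule.map L T := by rw [claim1]; exact hn
      obtain ⟨t, ht, hLt⟩ := hn'
      exact ⟨t, ht, Subtype.ext ((hE t).trans hLt)⟩
  let Φ : (O × O) →ₗ[O] ((O ⧸ (Ideal.span {π ^ m} : Ideal O)) × (O ⧸ (Ideal.span {π ^ m} : Ideal O))) :=
    LinearMap.prodMap (Ideal.span {π ^ m} : Ideal O).mkQ (Ideal.span {π ^ m} : Ideal O).mkQ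
  have claim3 : T = LinearMap.ker Φ := by
    show T = LinearMap.ker (LinearMap.prodMap _ _)
    rw [LinearMap.ker_prodMap, Submodule.ker_mkQ]
    apply le_antisymm
    · rw [Submodule.span_le]
      rintro x hx
      simp only [Set.mem_insert_iff, Set.mem_singleton_iff] at hx
      rcases hx with rfl | rfl
      · exact Submodule.mem_prod.mpr ⟨hIα ▸ Ideal.mem_span_singleton_self α, zero_mem _⟩
      · exact Submodule.mem_prod.mpr ⟨zero_mem _, hIβ ▸ Ideal.mem_span_singleton_self β⟩
    · rintro ⟨x, y⟩ hxy
      rw [Submodule.mem_prod] at hxy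
      obtain ⟨e, rfl⟩ := Ideal.mem_span_singleton.mp (show x ∈ Ideal.span {α} by rw [hIα]; exact hxy.1)
      obtain ⟨g, rfl⟩ := Ideal.mem_span_singleton.mp (show y ∈ Ideal.span {β} by rw [hIβ]; exact hxy.2)
      refine Submodule.mem_span_pair.mpr ⟨e, g, ?_⟩
      simp only [Prod.smul_mk, Prod.mk_add_mk, smul_eq_mul, Prod.mk.injEq]
      constructor
      · ring
      · ring
  have Φsurj : Function.Surjective Φ := by
    rintro ⟨a, b⟩
    obtain ⟨x, hx⟩ := Submodule.mkQ_surjective _ a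
    obtain ⟨y, hy⟩ := Submodule.mkQ_surjective _ b
    exact ⟨(x, y), by simp [Φ, hx, hy]⟩
  exact ⟨(Submodule.Quotient.equiv T S' E claim2).symm.trans
    ((Submodule.quotEquivOfEq T (LinearMap.ker Φ) claim3).trans
      (Φ.quotKerEquivOfSurjective Φsurj))⟩

/-- argument of Proposition 4.7: let `O` be a DVR with uniformizer
`π`, `α ≠ β ∈ πO`, `0 ≤ k ≤ ord(β−α)`, and `M(k) = ⟨(1,1),(0,π^k)⟩_O ⊂ O ⊕ O`
with `S·(a,b) = (αa, βb)`.  If `ord α = ord β` and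
`M(k)/S·M(k) ≅ O/π^{N₁} ⊕ O/π^{N₂}` with `N₁ < N₂`, then `k > 0` and
`ord(β−α) − k < min(ord α, ord β)`. -/
theorem stmt14 (O : Type*) [CommRing O] [IsDomain O] [IsDiscreteValuationRing O]
    (π : O) (hπ : Irreducible π) (α β : O) (hα : π ∣ α) (hβ : π ∣ β) (hαβ : α ≠ β)
    (k : ℕ) (hk : (π ^ k : O) ∣ β - α)
    (hm : emultiplicity π α = emultiplicity π β)
    (N₁ N₂ : ℕ) (hN : N₁ < N₂)
    (hquot : Nonempty
      (((Submodule.span O ({(1, 1), (0, π ^ k)} : Set (O × O))) ⧸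
          (Submodule.comap
            (Submodule.span O ({(1, 1), (0, π ^ k)} : Set (O × O))).subtype
            (Submodule.map
              (((LinearMap.lsmul O O) α).prodMap ((LinearMap.lsmul O O) β))
              (Submodule.span O ({(1, 1), (0, π ^ k)} : Set (O × O)))))) ≃ₗ[O]
        (O ⧸ (Ideal.span {π ^ N₁} : Ideal O)) × (O ⧸ (Ideal.span {π ^ N₂} : Ideal O)))) :
    0 < k ∧
      emultiplicity π (β - α) - (k : ℕ∞) <
        min (emultiplicity π α) (emultiplicity π β) := by
  -- nonvanishing
  have hα0 : α ≠ 0 := by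
    rintro rfl
    have hβ0 : β ≠ 0 := fun h => hαβ h.symm
    obtain ⟨n, w, hw⟩ := IsDiscreteValuationRing.eq_unit_mul_pow_irreducible hβ0 hπ
    rw [emultiplicity_zero, hw, emult_aux hπ] at hm
    exact (ENat.top_ne_coe n) hm
  have hβ0 : β ≠ 0 := by
    rintro rfl
    obtain ⟨n, w, hw⟩ := IsDiscreteValuationRing.eq_unit_mul_pow_irreducible hα0 hπ
    rw [emultiplicity_zero, hw, emult_aux hπ] at hm
    exact (ENat.coe_ne_top n) hm
  have hδ0 : β - α ≠ 0 := sub_ne_zero.mpr (Ne.symm hαβ)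
  obtain ⟨m, u, hαu⟩ := IsDiscreteValuationRing.eq_unit_mul_pow_irreducible hα0 hπ
  obtain ⟨m', uβ, hβu⟩ := IsDiscreteValuationRing.eq_unit_mul_pow_irreducible hβ0 hπ
  obtain ⟨d, v, hδu⟩ := IsDiscreteValuationRing.eq_unit_mul_pow_irreducible hδ0 hπ
  have eα : emultiplicity π α = (m : ℕ∞) := by rw [hαu, emult_aux hπ]
  have eβ : emultiplicity π β = (m' : ℕ∞) := by rw [hβu, emult_aux hπ]
  have eδ : emultiplicity π (β - α) = (d : ℕ∞) := by rw [hδu, emult_aux hπ]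
  have hmm' : m = m' := by
    rw [eα, eβ] at hm
    exact_mod_cast hm
  subst hmm'
  -- m ≥ 1
  have hm1 : 0 < m := by
    rcases Nat.eq_zero_or_pos m with h0 | h
    · exfalso
      have : IsUnit α := by rw [hαu, h0, pow_zero, mul_one]; exact u.isUnit
      exact hπ.not_isUnit (isUnit_of_dvd_unit hα this)
    · exact h
  -- k ≤ d
  have hkd : k ≤ d := by
    have h1 : π ^ k ∣ (v : O) * π ^ d := hδu ▸ hk
    rw [Units.dvd_mul_left] at h1
    exact (pow_dvd_pow_iff hπ.ne_zero hπ.not_isUnit).mp h1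
  -- m ≤ d
  have hmd : m ≤ d := by
    have h1 : π ^ m ∣ β - α := dvd_sub ⟨(uβ : O), by rw [hβu]; ring⟩ ⟨(u : O), by rw [hαu]; ring⟩
    rw [hδu, Units.dvd_mul_left] at h1
    exact (pow_dvd_pow_iff hπ.ne_zero hπ.not_isUnit).mp h1
  by_contra hcon
  rw [not_and_or] at hcon
  -- in either case m ≤ d - k
  have hged : m ≤ d - k := by
    rcases hcon with h | h
    · have hk0 : k = 0 := by omega
      omega
    · rw [eδ, eα, eβ, min_self, not_lt, ← ENat.coe_sub] at h
      exact_mod_cast h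
  -- the coefficient c
  set c : O := (v : O) * (uβ⁻¹ : Oˣ) * π ^ (d - k - m) with hcdef
  have hpow : (d - k - m) + m + k = d := by omega
  have hc : β - α = c * (β * π ^ k) := by
    rw [hδu, hβu, hcdef]
    rw [show ((v : O) * (uβ⁻¹ : Oˣ) * π ^ (d - k - m)) * ((uβ : O) * π ^ m * π ^ k)
      = ((uβ⁻¹ : Oˣ) * (uβ : O)) * ((v : O) * (π ^ (d - k - m) * π ^ m * π ^ k)) from by ring,
      Units.inv_mul, one_mul, ← pow_add, ← pow_add, hpow]
  -- ideal equalities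
  have hIα : (Ideal.span {α} : Ideal O) = Ideal.span {π ^ m} :=
    Ideal.span_singleton_eq_span_singleton.mpr ⟨u⁻¹, by rw [hαu]; rw [mul_comm ((u : O)) _, mul_assoc, Units.mul_inv, mul_one]⟩
  have hIβ : (Ideal.span {β} : Ideal O) = Ideal.span {π ^ m} :=
    Ideal.span_singleton_eq_span_singleton.mpr ⟨uβ⁻¹, by rw [hβu]; rw [mul_comm ((uβ : O)) _, mul_assoc, Units.mul_inv, mul_one]⟩
  obtain ⟨e⟩ := quot_equiv_aux π hπ.ne_zero α β k m c hc hIα hIβ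
  obtain ⟨G⟩ := hquot
  exact no_iso_aux hπ hm1 hN (e.symm.trans G)
end

section
/- Let M(k) = ⟨(1,1),(0,π^k)⟩_O ⊂ O⊕O with S·(a,b) = (αa, βb), where α ≠ β ∈ πO and 0 ≤ k ≤ ord(β−α). Then M(k) is isomorphic as a Λ_E-module to N_{ord(β−α)−k} = ⟨S + c_1/2, π^{ord(β−α)−k}⟩_O ⊂ Λ_E/((S−α)(S−β)), where c_1 = −(α+β) and p is odd. -/
/-- A generic linear map `(a,b) ↦ (p a + q b, r a + s b)` on `O × O`. -/
def stmt18.lmap {O : Type*} [CommRing O] (p q r s : O) : (O × O) →ₗ[O] O × O where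
  toFun z := (p * z.1 + q * z.2, r * z.1 + s * z.2)
  map_add' a b := by ext <;> simp <;> ring
  map_smul' t a := by ext <;> simp <;> ring

lemma stmt18.lmap_apply {O : Type*} [CommRing O] (p q r s : O) (z : O × O) :
    stmt18.lmap p q r s z = (p * z.1 + q * z.2, r * z.1 + s * z.2) := rfl

/-- Range of `(a,b) ↦ (a, a v + b w)` is the span of `(1,v)` and `(0,w)`. -/
lemma stmt18.range_lmap {O : Type*} [CommRing O] (v w : O) :
    LinearMap.range (stmt18.lmap (O := O) 1 0 v w) =
      Submodule.span O ({(1, v), (0, w)} : Set (O × O)) := by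
  apply le_antisymm
  · rintro _ ⟨⟨a, b⟩, rfl⟩
    rw [Submodule.mem_span_pair]
    exact ⟨a, b, by simp [stmt18.lmap_apply, Prod.ext_iff]; ring⟩
  · rw [Submodule.span_le]
    rintro z (rfl | rfl)
    · exact ⟨(1, 0), by simp [stmt18.lmap_apply]⟩
    · exact ⟨(0, 1), by simp [stmt18.lmap_apply]⟩

lemma stmt18.inj_lmap {O : Type*} [CommRing O] [IsDomain O] (v w : O) (hw : w ≠ 0) :
    Function.Injective (stmt18.lmap (O := O) 1 0 v w) := by
  intro a b hab
  rw [Prod.ext_iff] at hab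
  simp only [stmt18.lmap_apply] at hab
  obtain ⟨h1, h2⟩ := hab
  have h1' : a.1 = b.1 := by linear_combination h1
  exact Prod.ext h1' (mul_left_cancel₀ hw (by linear_combination h2 - v * h1'))

/-- Remark after Koike's theorem: with `p` odd, `α ≠ β ∈ πO`,
`0 ≤ k ≤ ord(β−α)`, and `f(S) = (S−α)(S−β) = S² + c₁S + c₀` (`c₁ = −(α+β)`,
`c₀ = αβ`), the module `M(k) = ⟨(1,1),(0,π^k)⟩_O ⊂ O⊕O` with `S·(a,b) = (αa, βb)`
is isomorphic as a `Λ_E`-module to `N_{ord(β−α)−k} = ⟨S + c₁/2, π^{ord(β−α)−k}⟩_O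
⊂ Λ_E/(f(S))`.  Here `Λ_E/(f(S))` is identified with `O⊕O` via `aS + b ↦ (a,b)`,
so `S` acts by `(a,b) ↦ (b − a c₁, −a c₀) = (b + a(α+β), −a·αβ)`,
`N_x = ⟨(1, c₁/2), (0, π^x)⟩_O`, `c = (β−α)π^{−k}` satisfies `c = u·π^x` with `u`
a unit (i.e. `x = ord(β−α) − k`), and `h = c₁/2` satisfies `2h = −(α+β)`
(`p` odd makes `2` a unit). -/
theorem stmt18 (O : Type*) [CommRing O] [IsDomain O] [IsDiscreteValuationRing O]
    (p : ℕ) (hp : p.Prime) (hodd : Odd p) (h2 : IsUnit (2 : O))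
    (π : O) (hπ : Irreducible π) (α β : O) (hα : π ∣ α) (hβ : π ∣ β) (hαβ : α ≠ β)
    (k : ℕ) (c : O) (hc : c * π ^ k = β - α)
    (x : ℕ) (u : O) (hu : IsUnit u) (hx : c = u * π ^ x)
    (h : O) (hh : 2 * h = -(α + β)) :
    ∃ e : (Submodule.span O ({(1, 1), (0, π ^ k)} : Set (O × O))) ≃ₗ[O]
        (Submodule.span O ({(1, h), (0, π ^ x)} : Set (O × O))),
      ∀ (y : O × O) (hy : y ∈ Submodule.span O ({(1, 1), (0, π ^ k)} : Set (O × O)))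
        (hSy : (α * y.1, β * y.2) ∈
          Submodule.span O ({(1, 1), (0, π ^ k)} : Set (O × O))),
        ((e ⟨(α * y.1, β * y.2), hSy⟩ : O × O) =
          ((e ⟨y, hy⟩ : O × O).2 + (e ⟨y, hy⟩ : O × O).1 * (α + β),
            -((e ⟨y, hy⟩ : O × O).1 * (α * β)))) := by
  classical
  obtain ⟨w, hw⟩ := h2.exists_right_inv
  obtain ⟨u', hu'⟩ := hu.exists_right_inv
  have hπ0 : π ≠ 0 := hπ.ne_zero
  have hπk : (π : O) ^ k ≠ 0 := pow_ne_zero _ hπ0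
  have hπx : (π : O) ^ x ≠ 0 := pow_ne_zero _ hπ0
  -- parametrizations of the two modules
  set ψ₁ : (O × O) →ₗ[O] O × O := stmt18.lmap 1 0 1 (π ^ k) with hψ₁
  set ψ₂ : (O × O) →ₗ[O] O × O := stmt18.lmap 1 0 h (π ^ x) with hψ₂
  have hr₁ : LinearMap.range ψ₁ = Submodule.span O ({(1, 1), (0, π ^ k)} : Set (O × O)) :=
    stmt18.range_lmap 1 (π ^ k)
  have hr₂ : LinearMap.range ψ₂ = Submodule.span O ({(1, h), (0, π ^ x)} : Set (O × O)) :=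
    stmt18.range_lmap h (π ^ x)
  have hi₁ : Function.Injective ψ₁ := stmt18.inj_lmap 1 (π ^ k) hπk
  have hi₂ : Function.Injective ψ₂ := stmt18.inj_lmap h (π ^ x) hπx
  -- the transition matrix and its inverse
  set Tf : (O × O) →ₗ[O] O × O := stmt18.lmap 0 1 (2 * (u * w)) (u * w * π ^ k) with hTf
  set Tg : (O × O) →ₗ[O] O × O := stmt18.lmap (-(w * π ^ k)) (2 * (w * u')) 1 0 with hTg
  have hTfg : Tf.comp Tg = LinearMap.id := by
    apply LinearMap.ext
    intro z
    simp only [LinearMap.comp_apply, LinearMap.id_apply, hTf, hTg, stmt18.lmap_apply]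
    ext
    · simp
    · simp only
      linear_combination (-(u * w * π ^ k * z.1) + (2 * w + 1) * u * u' * z.2) * hw +
        z.2 * hu'
  have hTgf : Tg.comp Tf = LinearMap.id := by
    apply LinearMap.ext
    intro z
    simp only [LinearMap.comp_apply, LinearMap.id_apply, hTf, hTg, stmt18.lmap_apply]
    ext
    · simp only
      linear_combination ((2 * w + 1) * u * u' * z.1 + u * u' * w * π ^ k * z.2) * hw +
        (z.1 + w * π ^ k * z.2) * hu'
    · simp
  set T : (O × O) ≃ₗ[O] O × O := LinearEquiv.ofLinear Tf Tg hTfg hTgf with hT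
  -- chain of equivalences
  set em₁ : (O × O) ≃ₗ[O] LinearMap.range ψ₁ := LinearEquiv.ofInjective ψ₁ hi₁ with hem₁
  set em₂ : (O × O) ≃ₗ[O] LinearMap.range ψ₂ := LinearEquiv.ofInjective ψ₂ hi₂ with hem₂
  set cast₁ := LinearEquiv.ofEq _ _ hr₁ with hcast₁
  set cast₂ := LinearEquiv.ofEq _ _ hr₂ with hcast₂
  set e := cast₁.symm.trans (em₁.symm.trans (T.trans (em₂.trans cast₂))) with he
  -- key computation: e of ψ₁ v is ψ₂ (Tf v)
  have key : ∀ (v : O × O) (hm : ψ₁ v ∈ Submodule.span O ({(1, 1), (0, π ^ k)} : Set (O × O))),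
      ((e ⟨ψ₁ v, hm⟩ : Submodule.span O ({(1, h), (0, π ^ x)} : Set (O × O))) : O × O)
        = ψ₂ (Tf v) := by
    intro v hm
    have step1 : cast₁.symm ⟨ψ₁ v, hm⟩ = ⟨ψ₁ v, hr₁ ▸ hm⟩ := rfl
    have step2 : em₁.symm ⟨ψ₁ v, hr₁ ▸ hm⟩ = v := by
      rw [LinearEquiv.symm_apply_eq]
      exact Subtype.ext (by simp [hem₁])
    rw [he]
    simp only [LinearEquiv.trans_apply, step1, step2]
    rfl
  refine ⟨e, ?_⟩
  intro y hy hSy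
  have hy' : y ∈ LinearMap.range ψ₁ := hr₁ ▸ hy
  obtain ⟨⟨a, b⟩, rfl⟩ := hy'
  -- identify the S-image as ψ₁ of explicit coordinates
  have hval : (α * (ψ₁ (a, b)).1, β * (ψ₁ (a, b)).2) = ψ₁ (α * a, a * c + β * b) := by
    simp only [hψ₁, stmt18.lmap_apply, Prod.ext_iff]
    constructor
    · ring
    · linear_combination -a * hc
  have hsub : (⟨(α * (ψ₁ (a, b)).1, β * (ψ₁ (a, b)).2), hSy⟩ :
      Submodule.span O ({(1, 1), (0, π ^ k)} : Set (O × O)))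
      = ⟨ψ₁ (α * a, a * c + β * b), hval ▸ hSy⟩ := Subtype.ext hval
  rw [hsub, key _ (hval ▸ hSy), key _ hy]
  -- explicit formula for ψ₂ ∘ Tf
  have pt : ∀ a b : O, ψ₂ (Tf (a, b)) = (b, a * c - b * α) := by
    intro a b
    simp only [hψ₂, hTf, stmt18.lmap_apply, Prod.ext_iff]
    constructor
    · ring
    · linear_combination (w * b) * hh + (a * c - b * h - b * α) * hw +
        (w * b) * hc + (-(w * (2 * a + b * π ^ k))) * hx
  rw [pt, pt]
  exact Prod.ext (by ring) (by ring)
end
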